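/- For every n ≥ 1, every L_{n+1}-splitting family is also an L_n-splitting family; hence μ_n ≤ μ_{n+1}. -/
import Mathlib

theorem myRamsey {κ : Type} [Finite κ] :
    ∀ (r : ℕ) (C : Finset ℕ → κ) (X : Set ℕ), X.Infinite →
      ∃ Z, Z ⊆ X ∧ Z.Infinite ∧ ∃ c, ∀ s : Finset ℕ, s.card = r → ↑s ⊆ Z → C s = c := by
  intro r
  induction r with
  | zero =>
    intro C X hX
    refine ⟨X, subset_rfl, hX, C ∅, ?_⟩
    intro s hs _
    rw [Finset.card_eq_zero.mp hs]
  | succ r ih =>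
    intro C X hX
    classical
    have step : ∀ P : Set ℕ, P.Infinite →
        ∃ a Q, a ∈ P ∧ Q ⊆ P ∧ Q.Infinite ∧ (∀ x ∈ Q, a < x) ∧
          ∃ c, ∀ s : Finset ℕ, s.card = r → ↑s ⊆ Q → C (insert a s) = c := by
      intro P hP
      obtain ⟨a, ha⟩ := hP.nonempty
      have hP' : (P ∩ {x | a < x}).Infinite := by
        have hsub : P \ (Set.Iic a) ⊆ P ∩ {x | a < x} := by
          rintro x ⟨hx1, hx2⟩
          exact ⟨hx1, by simpa [Set.mem_Iic] using hx2⟩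
        exact ((hP.diff (Set.finite_Iic a)).mono hsub)
      obtain ⟨Z, hZP, hZinf, c, hc⟩ := ih (fun s => C (insert a s)) _ hP'
      exact ⟨a, Z, ha, fun x hx => (hZP hx).1, hZinf, fun x hx => (hZP hx).2, c, hc⟩
    have hstep : ∀ t : {p : ℕ × Set ℕ // p.2.Infinite ∧ p.2 ⊆ X},
        ∃ (t' : {p : ℕ × Set ℕ // p.2.Infinite ∧ p.2 ⊆ X}) (c : κ),
        t'.1.1 ∈ t.1.2 ∧ t'.1.2 ⊆ t.1.2 ∧ (∀ x ∈ t'.1.2, t'.1.1 < x) ∧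
        (∀ s : Finset ℕ, s.card = r → ↑s ⊆ t'.1.2 → C (insert t'.1.1 s) = c) := by
      rintro ⟨⟨a, P⟩, hPinf, hPX⟩
      obtain ⟨b, Q, hb, hQP, hQinf, hlt, c, hc⟩ := step P hPinf
      exact ⟨⟨(b, Q), hQinf, fun x hx => hPX (hQP hx)⟩, c, hb, hQP, hlt, hc⟩
    choose next col h1 h2 h3 h4 using hstep
    let t0 : {p : ℕ × Set ℕ // p.2.Infinite ∧ p.2 ⊆ X} := ⟨(0, X), hX, subset_rfl⟩
    let seq : ℕ → {p : ℕ × Set ℕ // p.2.Infinite ∧ p.2 ⊆ X} := fun i => next^[i] t0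
    have hsucc : ∀ i, seq (i + 1) = next (seq i) := by
      intro i; simp only [seq, Function.iterate_succ_apply']
    let a : ℕ → ℕ := fun i => (seq i).1.1
    let P : ℕ → Set ℕ := fun i => (seq i).1.2
    have hmem : ∀ i, a (i + 1) ∈ P i := by
      intro i; show (seq (i+1)).1.1 ∈ (seq i).1.2; rw [hsucc i]; exact h1 (seq i)
    have hsubP : ∀ i, P (i + 1) ⊆ P i := by
      intro i; show (seq (i+1)).1.2 ⊆ (seq i).1.2; rw [hsucc i]; exact h2 (seq i)
    have hltP : ∀ i, ∀ x ∈ P (i + 1), a (i + 1) < x := by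
      intro i
      show ∀ x ∈ (seq (i+1)).1.2, (seq (i+1)).1.1 < x
      rw [hsucc i]; exact h3 (seq i)
    have hmono : ∀ i j, i ≤ j → P j ⊆ P i := by
      intro i j hij
      induction j with
      | zero => cases Nat.le_zero.mp hij; exact subset_rfl
      | succ j ihj =>
        rcases Nat.lt_or_ge i (j+1) with h | h
        · exact (hsubP j).trans (ihj (Nat.lt_succ_iff.mp h))
        · cases le_antisymm hij h; exact subset_rfl
    have hmemij : ∀ i j, i ≤ j → a (j + 1) ∈ P i :=
      fun i j hij => hmono i j hij (hmem j)
    have hamono : StrictMono (fun i => a (i + 1)) := by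
      intro i j hij
      exact hltP i _ (hmemij (i+1) j hij)
    obtain ⟨cstar, hcstar⟩ := Finite.exists_infinite_fiber (fun i => col (seq i))
    have hI : ((fun i => col (seq i)) ⁻¹' {cstar}).Infinite := Set.infinite_coe_iff.mp hcstar
    refine ⟨(fun i => a (i + 1)) '' ((fun i => col (seq i)) ⁻¹' {cstar}), ?_, ?_, cstar, ?_⟩
    · rintro x ⟨i, _, rfl⟩
      exact (seq i).2.2 (hmem i)
    · exact hI.image (hamono.injective.injOn)
    · intro s hcard hsZ
      have h0 : s.Nonempty := Finset.card_pos.mp (by omega)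
      obtain ⟨i, hiI, hieq⟩ := hsZ (s.min'_mem h0)
      simp only at hieq
      have hrest : ↑(s.erase (s.min' h0)) ⊆ P (i + 1) := by
        intro x hx
        have hxs : x ∈ s := Finset.mem_of_mem_erase (by exact_mod_cast hx)
        obtain ⟨j, hjI, hjeq⟩ := hsZ hxs
        simp only at hjeq
        have hxne : x ≠ s.min' h0 := Finset.ne_of_mem_erase (by exact_mod_cast hx)
        have hxgt : s.min' h0 < x := lt_of_le_of_ne (s.min'_le x hxs) (Ne.symm hxne)
        have hij : i < j := by
          by_contra hc
          push_neg at hc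
          have h5 : a (j+1) ≤ a (i+1) := hamono.le_iff_le.mpr hc
          rw [hjeq, hieq] at h5
          exact absurd h5 (not_le.mpr hxgt)
        rw [← hjeq]
        exact hmono (i+1) j hij (hmem j)
      have hcardrest : (s.erase (s.min' h0)).card = r := by
        rw [Finset.card_erase_of_mem (s.min'_mem h0), hcard]
        omega
      have hrest' : ↑(s.erase (s.min' h0)) ⊆ (next (seq i)).1.2 := by
        rw [← hsucc i]; exact hrest
      have hcol := h4 (seq i) _ hcardrest hrest'
      have hne : (next (seq i)).1.1 = s.min' h0 := by rw [← hieq, ← hsucc i]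
      rw [hne, Finset.insert_erase (s.min'_mem h0)] at hcol
      rw [hcol]
      exact hiI

lemma rank_orderEmbOfFin {α : Type*} [LinearOrder α] [DecidableEq α] (s : Finset α) {m : ℕ}
    (h : s.card = m) (b : Fin m) :
    (s.filter (fun x => x < s.orderEmbOfFin h b)).card = b.1 := by
  classical
  have himg : s.filter (fun x => x < s.orderEmbOfFin h b)
      = (Finset.Iio b).image (s.orderEmbOfFin h) := by
    ext x
    simp only [Finset.mem_filter, Finset.mem_image, Finset.mem_Iio]
    constructor
    · rintro ⟨hxs, hxlt⟩
      have hxr : x ∈ Set.range (s.orderEmbOfFin h) := by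
        rw [Finset.range_orderEmbOfFin]; exact hxs
      obtain ⟨b', rfl⟩ := hxr
      exact ⟨b', (s.orderEmbOfFin h).lt_iff_lt.mp hxlt, rfl⟩
    · rintro ⟨b', hb', rfl⟩
      exact ⟨s.orderEmbOfFin_mem h b', (s.orderEmbOfFin h).lt_iff_lt.mpr hb'⟩
  rw [himg, Finset.card_image_of_injective _ (s.orderEmbOfFin h).injective, Fin.card_Iio]

lemma exists_strictMono_extension (m : ℕ) (hm1 : 1 ≤ m) (Q : Finset (Fin (2*m)))
    (hQ : Q.card = m) (M : Fin m → ℕ) (hM0 : ∀ b, 2*m ≤ M b)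
    (hgap : ∀ b b' : Fin m, b < b' → M b + 2*m + 2 ≤ M b') :
    ∃ ι : Fin (2*m) → ℕ, StrictMono ι ∧ ∀ b : Fin m, ι (Q.orderEmbOfFin hQ b) = M b := by
  classical
  set q := Q.orderEmbOfFin hQ with hq
  set rk : Fin (2*m) → ℕ := fun p => (Q.filter (fun x => x < p)).card with hrk
  have hrk_le : ∀ p, rk p ≤ m := by
    intro p
    calc (Q.filter (fun x => x < p)).card ≤ Q.card :=
          Finset.card_le_card (Finset.filter_subset _ _)
      _ = m := hQ
  have hrk_mono : ∀ p p' : Fin (2*m), p ≤ p' → rk p ≤ rk p' := by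
    intro p p' hpp'
    apply Finset.card_le_card
    intro x hx
    rw [Finset.mem_filter] at hx ⊢
    exact ⟨hx.1, lt_of_lt_of_le hx.2 hpp'⟩
  have hrkq : ∀ b : Fin m, rk (q b) = b.1 := fun b => rank_orderEmbOfFin Q hQ b
  have hle : ∀ (p : Fin (2*m)) (h : rk p < m), p ≤ q ⟨rk p, h⟩ := by
    intro p h
    by_contra hc
    push_neg at hc
    have hsub : (Finset.Iic (⟨rk p, h⟩ : Fin m)).image q ⊆ Q.filter (fun x => x < p) := by
      intro x hx
      obtain ⟨b', hb', rfl⟩ := Finset.mem_image.mp hx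
      rw [Finset.mem_Iic] at hb'
      refine Finset.mem_filter.mpr ⟨Q.orderEmbOfFin_mem hQ b', ?_⟩
      exact lt_of_le_of_lt (q.le_iff_le.mpr hb') hc
    have hcard := Finset.card_le_card hsub
    rw [Finset.card_image_of_injective _ q.injective, Fin.card_Iic] at hcard
    have e1 : (Q.filter (fun x => x < p)).card = rk p := rfl
    have e2 : (⟨rk p, h⟩ : Fin m).1 = rk p := rfl
    omega
  have hfull : ∀ (p : Fin (2*m)), ¬ (rk p < m) → ∀ b : Fin m, q b < p := by
    intro p hnp b
    have hrkm : rk p = m := le_antisymm (hrk_le p) (by omega)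
    have heq : Q.filter (fun x => x < p) = Q := by
      apply Finset.eq_of_subset_of_card_le (Finset.filter_subset _ _)
      rw [hQ]
      exact le_of_eq hrkm.symm
    have hmem2 : q b ∈ Q.filter (fun x => x < p) := by
      rw [heq]; exact Q.orderEmbOfFin_mem hQ b
    exact (Finset.mem_filter.mp hmem2).2
  have hMle : ∀ b b' : Fin m, b ≤ b' → M b ≤ M b' := by
    intro b b' hb
    rcases eq_or_lt_of_le hb with h | h
    · rw [h]
    · have := hgap b b' h; omega
  set last : Fin m := ⟨m - 1, by omega⟩ with hlast
  refine ⟨fun p => if h : rk p < m then M ⟨rk p, h⟩ - ((q ⟨rk p, h⟩).1 - p.1)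
      else M last + (p.1 - (q last).1), ?_, ?_⟩
  · intro p p' hpp'
    have hmono := hrk_mono p p' (le_of_lt hpp')
    have hppv : p.1 < p'.1 := hpp'
    by_cases h1 : rk p < m
    · by_cases h2 : rk p' < m
      · simp only [dif_pos h1, dif_pos h2]
        have hle1 : p.1 ≤ (q ⟨rk p, h1⟩).1 := hle p h1
        have hle2 : p'.1 ≤ (q ⟨rk p', h2⟩).1 := hle p' h2
        rcases eq_or_lt_of_le hmono with heq | hlt
        · have hfin : (⟨rk p, h1⟩ : Fin m) = ⟨rk p', h2⟩ := Fin.ext heq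
          rw [hfin]
          have hM := hM0 (⟨rk p', h2⟩ : Fin m)
          have hqlt : (q ⟨rk p', h2⟩).1 < 2*m := (q ⟨rk p', h2⟩).2
          rw [hfin] at hle1
          omega
        · have hfinlt : (⟨rk p, h1⟩ : Fin m) < ⟨rk p', h2⟩ := hlt
          have hgap' := hgap _ _ hfinlt
          have hq1 : (q ⟨rk p, h1⟩).1 < 2*m := (q ⟨rk p, h1⟩).2
          have hq2 : (q ⟨rk p', h2⟩).1 < 2*m := (q ⟨rk p', h2⟩).2
          have hM1 := hM0 (⟨rk p, h1⟩ : Fin m)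
          omega
      · simp only [dif_pos h1, dif_neg h2]
        have hble : M ⟨rk p, h1⟩ ≤ M last := hMle _ _ (by simp [hlast, Fin.le_def]; omega)
        have hql : (q last).1 < p'.1 := hfull p' h2 last
        omega
    · have h2 : ¬ rk p' < m := by omega
      simp only [dif_neg h1, dif_neg h2]
      have hql : (q last).1 < p.1 := hfull p h1 last
      omega
  · intro b
    have h : rk (q b) < m := by rw [hrkq b]; exact b.2
    simp only [dif_pos h]
    have hfin : (⟨rk (q b), h⟩ : Fin m) = b := Fin.ext (hrkq b)
    rw [hfin]
    omega


/-- `f : [ω]^n → ω^{n+1}` (values strictly increasing tuples) belongs to `L_n`: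
no restriction of `f` to the `n`-subsets of an infinite set has image inside a
single cone `C_s` with `s` nonempty. -/
def MemL (n : ℕ) (f : Finset ℕ → (Fin (n + 1) → ℕ)) : Prop :=
  (∀ s : Finset ℕ, s.card = n → StrictMono (f s)) ∧
  ¬ ∃ (X : Set ℕ) (m : ℕ) (_ : 1 ≤ m) (hm : m ≤ n + 1) (t : Fin m → ℕ),
      X.Infinite ∧ ∀ s : Finset ℕ, s.card = n → ↑s ⊆ X →
        ∀ i : Fin m, f s (Fin.castLE hm i) = t i

/-- `S` `L_n`-splits `f`. -/
def LSplits (n : ℕ) (S : Set ℕ) (f : Finset ℕ → (Fin (n + 1) → ℕ)) : Prop :=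
  ∃ X Y : Set ℕ, X.Infinite ∧ Y.Infinite ∧ Disjoint X Y ∧
    (∀ s : Finset ℕ, s.card = n → ↑s ⊆ X → ∀ i, f s i ∈ S) ∧
    (∀ s : Finset ℕ, s.card = n → ↑s ⊆ Y → ∀ i, f s i ∉ S)

/-- An `L_n`-splitting family. -/
def IsLSplittingFamily (n : ℕ) (𝒮 : Set (Set ℕ)) : Prop :=
  (∀ S ∈ 𝒮, S.Infinite) ∧
  ∀ f : Finset ℕ → (Fin (n + 1) → ℕ), MemL n f → ∃ S ∈ 𝒮, LSplits n S f

/-- `μ_n`, the least size of an `L_n`-splitting family. -/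
noncomputable def muNumber (n : ℕ) : Cardinal :=
  sInf {c | ∃ 𝒮 : Set (Set ℕ), IsLSplittingFamily n 𝒮 ∧ Cardinal.mk 𝒮 = c}


theorem coneFalse (m : ℕ) (g : Finset ℕ → (Fin (m+1) → ℕ)) (hg : MemL m g)
    (X : Set ℕ) (hX : X.Infinite) (j : Fin (m+1)) (V : ℕ)
    (hbd : ∀ s : Finset ℕ, s.card = m → ↑s ⊆ X → ∀ i : Fin (m+1), i ≤ j → g s i ≤ V) :
    False := by
  classical
  have hm : j.1 + 1 ≤ m + 1 := by have := j.2; omega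
  obtain ⟨Z, hZX, hZinf, c, hc⟩ :=
    myRamsey m
      (fun s => fun i : Fin (j.1+1) => (⟨min (g s (Fin.castLE hm i)) V, by omega⟩ : Fin (V+1)))
      X hX
  apply hg.2
  refine ⟨Z, j.1 + 1, by omega, hm, fun i => (c i).1, hZinf, ?_⟩
  intro s hs hsZ i
  have h5 := congrFun (hc s hs hsZ) i
  have h6 : min (g s (Fin.castLE hm i)) V = (c i).1 := congrArg Fin.val h5
  have h7 : g s (Fin.castLE hm i) ≤ V := by
    apply hbd s hs (fun x hx => hZX (hsZ hx))
    rw [Fin.le_def]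
    simp only [Fin.coe_castLE]
    have := i.2
    omega
  rw [min_eq_left h7] at h6
  exact h6

theorem exists_splits (m : ℕ) (hm1 : 1 ≤ m) (g : Finset ℕ → (Fin (m+1) → ℕ))
    (hg : MemL m g) : ∃ S : Set ℕ, S.Infinite ∧ LSplits m S g := by
  classical
  let C : Finset ℕ → Finset (Finset (Fin (2*m)) × Fin (m+1) × Fin (m+1)) := fun w =>
    if h : w.card = 2*m then
      Finset.univ.filter (fun t => t.1.card = m ∧
        g (t.1.image (w.orderEmbOfFin h)) t.2.1 = g ((t.1ᶜ).image (w.orderEmbOfFin h)) t.2.2)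
    else ∅
  have hCdef : ∀ (w : Finset ℕ) (h : w.card = 2*m), C w =
      Finset.univ.filter (fun t => t.1.card = m ∧
        g (t.1.image (w.orderEmbOfFin h)) t.2.1 = g ((t.1ᶜ).image (w.orderEmbOfFin h)) t.2.2) :=
    fun w h => dif_pos h
  obtain ⟨Z, -, hZinf, c, hc⟩ := myRamsey (2*m) C Set.univ (Set.infinite_univ)
  have hZinf' : {x | x ∈ Z}.Infinite := hZinf
  let z : ℕ → ℕ := Nat.nth (· ∈ Z)
  have hzmono : StrictMono z := Nat.nth_strictMono hZinf'
  have hzmem : ∀ r, z r ∈ Z := fun r => Nat.nth_mem_of_infinite hZinf' r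
  have key : ∀ (v : Fin (2*m) → ℕ), StrictMono v → (∀ p, v p ∈ Z) →
      ∀ (A : Finset (Fin (2*m))) (i j : Fin (m+1)),
      ((A, i, j) ∈ c ↔ (A.card = m ∧ g (A.image v) i = g (Aᶜ.image v) j)) := by
    intro v hv hvZ A i j
    have hwcard : (Finset.univ.image v).card = 2*m := by
      rw [Finset.card_image_of_injective _ hv.injective, Finset.card_univ, Fintype.card_fin]
    have hwZ : ↑(Finset.univ.image v) ⊆ Z := by
      intro x hx
      simp only [Finset.coe_image, Set.mem_image] at hx
      obtain ⟨p, -, rfl⟩ := hx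
      exact hvZ p
    have hCw := hc _ hwcard hwZ
    have hemb : ⇑((Finset.univ.image v).orderEmbOfFin hwcard) = v :=
      (Finset.orderEmbOfFin_unique hwcard
        (fun p => Finset.mem_image_of_mem v (Finset.mem_univ p)) hv).symm
    rw [← hCw, hCdef _ hwcard, Finset.mem_filter, hemb]
    simp only [Finset.mem_univ, true_and]
  -- Step 1 : no triple belongs to the homogeneous colour
  have hcnone : ∀ (A : Finset (Fin (2*m))) (i j : Fin (m+1)), (A, i, j) ∉ c := by
    intro A i j hmemc
    have hkey0 := (key (fun r => z r) (fun a b hab => hzmono hab) (fun p => hzmem p) A i j).mp hmemc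
    have hAcard : A.card = m := hkey0.1
    have hAc : Aᶜ.card = m := by
      have h1 := Finset.card_compl A
      rw [hAcard, Fintype.card_fin] at h1
      omega
    have keyeq : ∀ (v : Fin (2*m) → ℕ), StrictMono v → (∀ p, v p ∈ Z) →
        g (A.image v) i = g (Aᶜ.image v) j :=
      fun v hv hvZ => ((key v hv hvZ A i j).mp hmemc).2
    have chain : ∀ (x y : Fin (2*m) → ℕ), StrictMono x → (∀ p, x p ∈ Z) →
        StrictMono y → (∀ p, y p ∈ Z) → (∀ p q : Fin (2*m), x p < y q) →
        g (Aᶜ.image y) j = g (Aᶜ.image x) j := by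
      intro x y hx hxZ hy hyZ hxy
      have hvm : ∀ r' : ℕ,
          StrictMono (fun p : Fin (2*m) => if (p:ℕ) < 2*m - r' then x p else y p) := by
        intro r' p q hpq
        have hpqv : (p:ℕ) < (q:ℕ) := hpq
        by_cases h1 : (p:ℕ) < 2*m - r'
        · by_cases h2 : (q:ℕ) < 2*m - r'
          · simp only [if_pos h1, if_pos h2]; exact hx hpq
          · simp only [if_pos h1, if_neg h2]; exact hxy p q
        · by_cases h2 : (q:ℕ) < 2*m - r'
          · omega
          · simp only [if_neg h1, if_neg h2]; exact hy hpq
      have hvZ : ∀ (r' : ℕ) (p : Fin (2*m)),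
          (if (p:ℕ) < 2*m - r' then x p else y p) ∈ Z := by
        intro r' p
        by_cases h : (p:ℕ) < 2*m - r'
        · simp only [if_pos h]; exact hxZ p
        · simp only [if_neg h]; exact hyZ p
      have main : ∀ r : ℕ, r ≤ 2*m →
          g (Aᶜ.image (fun p : Fin (2*m) => if (p:ℕ) < 2*m - r then x p else y p)) j
            = g (Aᶜ.image x) j := by
        intro r
        induction r with
        | zero =>
          intro _
          have himg : Aᶜ.image (fun p : Fin (2*m) => if (p:ℕ) < 2*m - 0 then x p else y p)
              = Aᶜ.image x := by
            apply Finset.image_congr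
            intro p _
            have hp2 : (p:ℕ) < 2*m - 0 := by have := p.2; omega
            simp only [if_pos hp2]
          rw [himg]
        | succ r ihr =>
          intro hr
          have hstep : ∀ p : Fin (2*m), (p:ℕ) ≠ 2*m - r - 1 →
              (if (p:ℕ) < 2*m - (r+1) then x p else y p)
                = (if (p:ℕ) < 2*m - r then x p else y p) := by
            intro p hne
            by_cases h : (p:ℕ) < 2*m - (r+1)
            · rw [if_pos h, if_pos (by omega)]
            · rw [if_neg h, if_neg (by omega)]
          have hpslt : 2*m - r - 1 < 2*m := by omega
          by_cases hps : (⟨2*m - r - 1, hpslt⟩ : Fin (2*m)) ∈ A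
          · have himg : Aᶜ.image (fun p : Fin (2*m) => if (p:ℕ) < 2*m - (r+1) then x p else y p)
                = Aᶜ.image (fun p : Fin (2*m) => if (p:ℕ) < 2*m - r then x p else y p) := by
              apply Finset.image_congr
              intro p hp
              apply hstep
              intro hpv
              have hpe : p = ⟨2*m - r - 1, hpslt⟩ := Fin.ext hpv
              have hpA : p ∉ A := Finset.mem_compl.mp (by exact_mod_cast hp)
              rw [hpe] at hpA
              exact hpA hps
            rw [himg]
            exact ihr (by omega)
          · have himgA : A.image (fun p : Fin (2*m) => if (p:ℕ) < 2*m - (r+1) then x p else y p)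
                = A.image (fun p : Fin (2*m) => if (p:ℕ) < 2*m - r then x p else y p) := by
              apply Finset.image_congr
              intro p hp
              apply hstep
              intro hpv
              have hpe : p = ⟨2*m - r - 1, hpslt⟩ := Fin.ext hpv
              have hpA : p ∈ A := by exact_mod_cast hp
              rw [hpe] at hpA
              exact hps hpA
            calc g (Aᶜ.image (fun p : Fin (2*m) => if (p:ℕ) < 2*m - (r+1) then x p else y p)) j
                = g (A.image (fun p : Fin (2*m) => if (p:ℕ) < 2*m - (r+1) then x p else y p)) i :=
                  (keyeq _ (hvm (r+1)) (hvZ (r+1))).symm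
              _ = g (A.image (fun p : Fin (2*m) => if (p:ℕ) < 2*m - r then x p else y p)) i := by
                  rw [himgA]
              _ = g (Aᶜ.image (fun p : Fin (2*m) => if (p:ℕ) < 2*m - r then x p else y p)) j :=
                  keyeq _ (hvm r) (hvZ r)
              _ = g (Aᶜ.image x) j := ihr (by omega)
      have hend := main (2*m) le_rfl
      have himgy : Aᶜ.image (fun p : Fin (2*m) => if (p:ℕ) < 2*m - 2*m then x p else y p)
          = Aᶜ.image y := by
        apply Finset.image_congr
        intro p _
        show (if (p:ℕ) < 2*m - 2*m then x p else y p) = y p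
        rw [if_neg (by omega)]
      rw [himgy] at hend
      exact hend
    have allsame : ∀ (v v' : Fin (2*m) → ℕ), StrictMono v → (∀ p, v p ∈ Z) →
        StrictMono v' → (∀ p, v' p ∈ Z) → g (Aᶜ.image v) j = g (Aᶜ.image v') j := by
      intro v v' hv hvZ hv' hv'Z
      set N : ℕ := (Finset.univ.sup (fun p : Fin (2*m) => max (v p) (v' p))) + 1 with hN
      have hyc : ∀ p q : Fin (2*m), v p < z (N + (q:ℕ)) ∧ v' p < z (N + (q:ℕ)) := by
        intro p q
        have hsup : max (v p) (v' p) ≤ Finset.univ.sup (fun p : Fin (2*m) => max (v p) (v' p)) := by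
          simpa using Finset.le_sup (f := fun p : Fin (2*m) => max (v p) (v' p)) (Finset.mem_univ p)
        have hA : v p < N := by
          rw [hN]; exact Nat.lt_succ_of_le ((le_max_left _ _).trans hsup)
        have hB : v' p < N := by
          rw [hN]; exact Nat.lt_succ_of_le ((le_max_right _ _).trans hsup)
        have h2 : N + (q:ℕ) ≤ z (N + (q:ℕ)) := hzmono.le_apply
        exact ⟨lt_of_lt_of_le hA ((Nat.le_add_right _ _).trans h2),
          lt_of_lt_of_le hB ((Nat.le_add_right _ _).trans h2)⟩
      have hymono : StrictMono (fun q : Fin (2*m) => z (N + (q:ℕ))) := by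
        intro p q h
        exact hzmono (by have : (p:ℕ) < (q:ℕ) := h; omega)
      have c1 := chain v (fun q : Fin (2*m) => z (N + (q:ℕ))) hv hvZ hymono
        (fun q => hzmem _) (fun p q => (hyc p q).1)
      have c2 := chain v' (fun q : Fin (2*m) => z (N + (q:ℕ))) hv' hv'Z hymono
        (fun q => hzmem _) (fun p q => (hyc p q).2)
      exact c1.symm.trans c2
    -- the sparse subset
    have hXXinj : Function.Injective (fun r : ℕ => z ((2*m+2) * r + 2*m)) := by
      intro r r' h
      have h2 := hzmono.injective h
      have h3 : (2*m+2) * r = (2*m+2) * r' := by omega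
      exact Nat.eq_of_mul_eq_mul_left (by omega) h3
    have hXXinf : (Set.range (fun r : ℕ => z ((2*m+2) * r + 2*m))).Infinite :=
      Set.infinite_range_of_injective hXXinj
    have hval : ∀ u : Finset ℕ, u.card = m →
        ↑u ⊆ Set.range (fun r : ℕ => z ((2*m+2) * r + 2*m)) →
        g u j = g (Aᶜ.image (fun p : Fin (2*m) => z (p:ℕ))) j := by
      intro u hu huXX
      have hchoice : ∀ b : Fin m, ∃ r : ℕ, z ((2*m+2) * r + 2*m) = u.orderEmbOfFin hu b := by
        intro b
        exact huXX (u.orderEmbOfFin_mem hu b)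
      choose R hR using hchoice
      have hMz : ∀ b, z ((2*m+2) * R b + 2*m) = u.orderEmbOfFin hu b := hR
      have hMmono : StrictMono (fun b => (2*m+2) * R b + 2*m) := by
        intro b b' hbb'
        have h1 : z ((2*m+2) * R b + 2*m) < z ((2*m+2) * R b' + 2*m) := by
          rw [hMz b, hMz b']
          exact (u.orderEmbOfFin hu).strictMono hbb'
        exact hzmono.lt_iff_lt.mp h1
      have hgap : ∀ b b' : Fin m, b < b' →
          ((2*m+2) * R b + 2*m) + 2*m + 2 ≤ (2*m+2) * R b' + 2*m := by
        intro b b' h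
        have h0 := hMmono h
        have hRlt : R b < R b' := by
          by_contra hcon
          push_neg at hcon
          have : (2*m+2) * R b' ≤ (2*m+2) * R b := Nat.mul_le_mul_left _ hcon
          simp only at h0
          omega
        have h2 : (2*m+2) * (R b + 1) ≤ (2*m+2) * R b' := Nat.mul_le_mul_left _ hRlt
        have h3 : (2*m+2) * (R b + 1) = (2*m+2) * R b + (2*m+2) := by ring
        omega
      obtain ⟨ι, hι, hιQ⟩ := exists_strictMono_extension m hm1 Aᶜ hAc
        (fun b => (2*m+2) * R b + 2*m)
        (fun b => by show 2*m ≤ (2*m+2) * R b + 2*m; omega) hgap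
      have hvmono : StrictMono (fun p : Fin (2*m) => z (ι p)) := fun p q h => hzmono (hι h)
      have hvZ : ∀ p : Fin (2*m), z (ι p) ∈ Z := fun p => hzmem _
      have himgu : Aᶜ.image (fun p : Fin (2*m) => z (ι p)) = u := by
        have h1 : Aᶜ = Finset.univ.image ⇑(Aᶜ.orderEmbOfFin hAc) := by
          apply Finset.coe_injective
          rw [Finset.coe_image, Finset.coe_univ, Set.image_univ, Finset.range_orderEmbOfFin]
        have h2 : u = Finset.univ.image ⇑(u.orderEmbOfFin hu) := by
          apply Finset.coe_injective
          rw [Finset.coe_image, Finset.coe_univ, Set.image_univ, Finset.range_orderEmbOfFin]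
        conv_lhs => rw [h1]
        rw [Finset.image_image]
        conv_rhs => rw [h2]
        apply Finset.image_congr
        intro b _
        show z (ι (Aᶜ.orderEmbOfFin hAc b)) = u.orderEmbOfFin hu b
        rw [hιQ b, hMz b]
      rw [← himgu]
      exact allsame (fun p : Fin (2*m) => z (ι p)) (fun p : Fin (2*m) => z (p:ℕ))
        hvmono hvZ (fun p q h => hzmono (by exact h)) (fun p => hzmem _)
    exact coneFalse m g hg _ hXXinf j (g (Aᶜ.image (fun p : Fin (2*m) => z (p:ℕ))) j)
      (by
        intro s hs hsXX i' hi'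
        have h1 := hval s hs hsXX
        have h2 := (hg.1 s hs).monotone hi'
        omega)
  -- Step 2 : build the splitting
  have hXinf : (Set.range (fun r : ℕ => z (2*r))).Infinite :=
    Set.infinite_range_of_injective (fun r r' h => by
      have := hzmono.injective h; omega)
  have hYinf : (Set.range (fun r : ℕ => z (2*r+1))).Infinite :=
    Set.infinite_range_of_injective (fun r r' h => by
      have := hzmono.injective h; omega)
  have hXZ : Set.range (fun r : ℕ => z (2*r)) ⊆ Z := by
    rintro x ⟨r, rfl⟩; exact hzmem _
  have hYZ : Set.range (fun r : ℕ => z (2*r+1)) ⊆ Z := by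
    rintro x ⟨r, rfl⟩; exact hzmem _
  have hdisj : Disjoint (Set.range (fun r : ℕ => z (2*r))) (Set.range (fun r : ℕ => z (2*r+1))) := by
    rw [Set.disjoint_left]
    rintro x ⟨r, rfl⟩ ⟨r', hr'⟩
    have := hzmono.injective hr'
    omega
  have hdiff : ∀ (s s' : Finset ℕ), s.card = m → s'.card = m →
      ↑s ⊆ Set.range (fun r : ℕ => z (2*r)) → ↑s' ⊆ Set.range (fun r : ℕ => z (2*r+1)) →
      ∀ (i i' : Fin (m+1)), g s i ≠ g s' i' := by
    intro s s' hs hs' hsX hs'Y i i'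
    have hdisj' : Disjoint s s' := by
      rw [Finset.disjoint_left]
      intro a ha ha'
      exact Set.disjoint_left.mp hdisj (hsX ha) (hs'Y ha')
    have hwcard : (s ∪ s').card = 2*m := by
      rw [Finset.card_union_of_disjoint hdisj', hs, hs']
      ring
    have hewZ : ∀ p, (s ∪ s').orderEmbOfFin hwcard p ∈ Z := by
      intro p
      have hmem := (s ∪ s').orderEmbOfFin_mem hwcard p
      rcases Finset.mem_union.mp hmem with h | h
      · exact hXZ (hsX h)
      · exact hYZ (hs'Y h)
    have himgA : (Finset.univ.filter
          (fun p => (s ∪ s').orderEmbOfFin hwcard p ∈ s)).image ⇑((s ∪ s').orderEmbOfFin hwcard)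
        = s := by
      apply Finset.Subset.antisymm
      · intro x hx
        obtain ⟨p, hp, rfl⟩ := Finset.mem_image.mp hx
        exact (Finset.mem_filter.mp hp).2
      · intro x hx
        have hxw : x ∈ s ∪ s' := Finset.mem_union_left _ hx
        have hxr : x ∈ Set.range ⇑((s ∪ s').orderEmbOfFin hwcard) := by
          rw [Finset.range_orderEmbOfFin]; exact hxw
        obtain ⟨p, rfl⟩ := hxr
        exact Finset.mem_image_of_mem _ (Finset.mem_filter.mpr ⟨Finset.mem_univ p, hx⟩)
    have himgAc : ((Finset.univ.filter
          (fun p => (s ∪ s').orderEmbOfFin hwcard p ∈ s))ᶜ).image ⇑((s ∪ s').orderEmbOfFin hwcard)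
        = s' := by
      apply Finset.Subset.antisymm
      · intro x hx
        obtain ⟨p, hp, rfl⟩ := Finset.mem_image.mp hx
        have hpA := Finset.mem_compl.mp hp
        have hpns : (s ∪ s').orderEmbOfFin hwcard p ∉ s := by
          intro hcon
          exact hpA (Finset.mem_filter.mpr ⟨Finset.mem_univ p, hcon⟩)
        have hmemw := (s ∪ s').orderEmbOfFin_mem hwcard p
        rcases Finset.mem_union.mp hmemw with h | h
        · exact absurd h hpns
        · exact h
      · intro x hx
        have hxw : x ∈ s ∪ s' := Finset.mem_union_right _ hx
        have hxr : x ∈ Set.range ⇑((s ∪ s').orderEmbOfFin hwcard) := by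
          rw [Finset.range_orderEmbOfFin]; exact hxw
        obtain ⟨p, rfl⟩ := hxr
        have hpA : p ∉ Finset.univ.filter
            (fun p => (s ∪ s').orderEmbOfFin hwcard p ∈ s) := by
          intro hcon
          exact Finset.disjoint_left.mp hdisj' (Finset.mem_filter.mp hcon).2 hx
        exact Finset.mem_image_of_mem _ (Finset.mem_compl.mpr hpA)
    intro heqv
    apply hcnone (Finset.univ.filter (fun p => (s ∪ s').orderEmbOfFin hwcard p ∈ s)) i i'
    rw [key ⇑((s ∪ s').orderEmbOfFin hwcard) ((s ∪ s').orderEmbOfFin hwcard).strictMono hewZ]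
    constructor
    · calc (Finset.univ.filter (fun p => (s ∪ s').orderEmbOfFin hwcard p ∈ s)).card
          = ((Finset.univ.filter
              (fun p => (s ∪ s').orderEmbOfFin hwcard p ∈ s)).image
                ⇑((s ∪ s').orderEmbOfFin hwcard)).card :=
            (Finset.card_image_of_injective _ ((s ∪ s').orderEmbOfFin hwcard).injective).symm
      _ = s.card := by rw [himgA]
      _ = m := hs
    · rw [himgA, himgAc]
      exact heqv
  refine ⟨{v | ∃ s : Finset ℕ, s.card = m ∧ ↑s ⊆ Set.range (fun r : ℕ => z (2*r)) ∧
      ∃ i, g s i = v}, ?_, Set.range (fun r : ℕ => z (2*r)), Set.range (fun r : ℕ => z (2*r+1)),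
      hXinf, hYinf, hdisj, ?_, ?_⟩
  · by_contra hfin
    rw [Set.not_infinite] at hfin
    obtain ⟨V, hV⟩ := hfin.bddAbove
    apply coneFalse m g hg _ hXinf (Fin.last m) V
    intro s hs hsX i _
    exact hV ⟨s, hs, hsX, i, rfl⟩
  · intro s hs hsX i
    exact ⟨s, hs, hsX, i, rfl⟩
  · rintro s' hs' hs'Y i ⟨s, hs, hsX, i0, heq⟩
    exact hdiff s s' hs hs' hsX hs'Y i0 i heq


theorem reductionStep (n : ℕ) (𝒮 : Set (Set ℕ)) (h : IsLSplittingFamily (n + 1) 𝒮) :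
    IsLSplittingFamily n 𝒮 := by
  classical
  refine ⟨h.1, ?_⟩
  intro f hf
  let G : Finset ℕ → (Fin (n + 2) → ℕ) := fun s i =>
    if hi : (i : ℕ) < n + 1 then f (s.erase (s.sup id)) ⟨i, hi⟩
    else f (s.erase (s.sup id)) (Fin.last n) + 1 + s.sup id
  have hGdef : ∀ (s : Finset ℕ) (i : Fin (n + 2)), G s i =
      if hi : (i : ℕ) < n + 1 then f (s.erase (s.sup id)) ⟨i, hi⟩
      else f (s.erase (s.sup id)) (Fin.last n) + 1 + s.sup id := fun s i => rfl
  have hsupmem : ∀ s : Finset ℕ, s.Nonempty → s.sup id ∈ s := by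
    intro s hs
    rw [← Finset.sup'_eq_sup hs id, ← Finset.max'_eq_sup']
    exact s.max'_mem hs
  have hkey : ∀ (s' : Finset ℕ) (M : ℕ), (∀ x ∈ s', x < M) →
      ((insert M s').sup id = M ∧ (insert M s').erase M = s') := by
    intro s' M hM
    have hMn : M ∉ s' := fun hc => lt_irrefl M (hM M hc)
    constructor
    · rw [Finset.sup_insert]
      exact sup_eq_left.mpr (Finset.sup_le (fun x hx => le_of_lt (hM x hx)))
    · exact Finset.erase_insert hMn
  have hGval : ∀ (s' : Finset ℕ) (M : ℕ), s'.card = n → (∀ x ∈ s', x < M) →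
      ∀ i : Fin (n + 1), G (insert M s') ⟨i.1, by omega⟩ = f s' i := by
    intro s' M hs' hM i
    obtain ⟨hsup, hers⟩ := hkey s' M hM
    rw [hGdef, dif_pos (show ((⟨i.1, by omega⟩ : Fin (n+2)) : ℕ) < n + 1 from i.2)]
    rw [hsup, hers]
  have hGmem : MemL (n + 1) G := by
    constructor
    · intro s hs
      have hsne : s.Nonempty := Finset.card_pos.mp (by omega)
      have hecard : (s.erase (s.sup id)).card = n := by
        rw [Finset.card_erase_of_mem (hsupmem s hsne), hs]
        omega
      have hmono := hf.1 _ hecard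
      intro i j hij
      have hijv : (i:ℕ) < (j:ℕ) := hij
      by_cases hi : (i:ℕ) < n + 1
      · by_cases hj : (j:ℕ) < n + 1
        · rw [hGdef, hGdef, dif_pos hi, dif_pos hj]
          exact hmono (show (⟨i.1, hi⟩ : Fin (n+1)) < ⟨j.1, hj⟩ from hijv)
        · rw [hGdef, hGdef, dif_pos hi, dif_neg hj]
          have h1 : f (s.erase (s.sup id)) ⟨i.1, hi⟩ ≤ f (s.erase (s.sup id)) (Fin.last n) := by
            apply hmono.monotone
            rw [Fin.le_def]
            simp only [Fin.val_last]
            omega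
          omega
      · exfalso
        have hi2 := i.2
        have hj2 := j.2
        omega
    · rintro ⟨X, m', h1m, hm', t, hXinf, hcone⟩
      apply hf.2
      refine ⟨X, min m' (n+1), by omega, by omega,
        fun i => t (Fin.castLE (by omega) i), hXinf, ?_⟩
      intro s' hs' hs'X i
      obtain ⟨M, hMX, hMgt⟩ := hXinf.exists_gt (s'.sup id)
      have hMgt' : ∀ x ∈ s', x < M := fun x hx =>
        lt_of_le_of_lt (Finset.le_sup (f := id) hx) hMgt
      have hins : ↑(insert M s') ⊆ X := by
        rw [Finset.coe_insert]
        exact Set.insert_subset hMX hs'X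
      have hinscard : (insert M s').card = n + 1 := by
        rw [Finset.card_insert_of_notMem (fun hc => lt_irrefl M (hMgt' M hc)), hs']
      have hcone' := hcone (insert M s') hinscard hins (Fin.castLE (by omega) i)
      have hcast1 : (Fin.castLE hm' (Fin.castLE (by omega) i)) = (⟨i.1, by omega⟩ : Fin (n+2)) :=
        Fin.ext rfl
      rw [hcast1] at hcone'
      have hval := hGval s' M hs' hMgt' (Fin.castLE (by omega) i)
      have hcast2 : ((Fin.castLE (by omega : min m' (n+1) ≤ n+1) i : Fin (n+1)).1) = i.1 := rfl
      rw [← hval]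
      exact hcone'
  obtain ⟨S, hS𝒮, hsp⟩ := h.2 G hGmem
  obtain ⟨XX, YY, hXXinf, hYYinf, hdisj, hXside, hYside⟩ := hsp
  refine ⟨S, hS𝒮, XX, YY, hXXinf, hYYinf, hdisj, ?_, ?_⟩
  · intro s' hs' hs'X i
    obtain ⟨M, hMX, hMgt⟩ := hXXinf.exists_gt (s'.sup id)
    have hMgt' : ∀ x ∈ s', x < M := fun x hx =>
      lt_of_le_of_lt (Finset.le_sup (f := id) hx) hMgt
    rw [← hGval s' M hs' hMgt' i]
    apply hXside (insert M s')
    · rw [Finset.card_insert_of_notMem (fun hc => lt_irrefl M (hMgt' M hc)), hs']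
    · rw [Finset.coe_insert]
      exact Set.insert_subset hMX hs'X
  · intro s' hs' hs'Y i
    obtain ⟨M, hMX, hMgt⟩ := hYYinf.exists_gt (s'.sup id)
    have hMgt' : ∀ x ∈ s', x < M := fun x hx =>
      lt_of_le_of_lt (Finset.le_sup (f := id) hx) hMgt
    rw [← hGval s' M hs' hMgt' i]
    apply hYside (insert M s')
    · rw [Finset.card_insert_of_notMem (fun hc => lt_irrefl M (hMgt' M hc)), hs']
    · rw [Finset.coe_insert]
      exact Set.insert_subset hMX hs'Y


/-- For every `n ≥ 1`, every `L_{n+1}`-splitting family is `L_n`-splitting;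
hence `μ_n ≤ μ_{n+1}`. -/
theorem lSplitting_succ_is_lSplitting :
    ∀ n : ℕ, 1 ≤ n →
      (∀ 𝒮 : Set (Set ℕ), IsLSplittingFamily (n + 1) 𝒮 → IsLSplittingFamily n 𝒮) ∧
      muNumber n ≤ muNumber (n + 1) := by
  intro n hn
  refine ⟨fun 𝒮 h => reductionStep n 𝒮 h, ?_⟩
  have hsub : {c | ∃ 𝒮 : Set (Set ℕ), IsLSplittingFamily (n+1) 𝒮 ∧ Cardinal.mk 𝒮 = c} ⊆
      {c | ∃ 𝒮 : Set (Set ℕ), IsLSplittingFamily n 𝒮 ∧ Cardinal.mk 𝒮 = c} := by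
    rintro c ⟨𝒮, h𝒮, rfl⟩
    exact ⟨𝒮, reductionStep n 𝒮 h𝒮, rfl⟩
  have hne : {c | ∃ 𝒮 : Set (Set ℕ), IsLSplittingFamily (n+1) 𝒮 ∧ Cardinal.mk 𝒮 = c}.Nonempty := by
    refine ⟨Cardinal.mk {S : Set ℕ | S.Infinite}, {S : Set ℕ | S.Infinite},
      ⟨fun S hS => hS, ?_⟩, rfl⟩
    intro g hg
    obtain ⟨S, hSinf, hsp⟩ := exists_splits (n+1) (by omega) g hg
    exact ⟨S, hSinf, hsp⟩
  exact csInf_le_csInf (OrderBot.bddBelow _) hne hsub
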